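/- Let φ' be the left derivative of a convex function χ : ℝ → ℝ that is bounded below and nondecreasing. Then lim_{t→−∞} χ'(t) = 0 and, if additionally χ(0) = 0 and χ'(0) = 1, then ∫₀^∞ χ''(−s) ds = 1 in the Lebesgue–Stieltjes sense, i.e., the total variation of χ' on (−∞, 0] equals 1. -/

import Mathlib

open Filter Set Topology

lemma aux_hasDeriv (χ : ℝ → ℝ) (hconv : ConvexOn ℝ Set.univ χ) (t : ℝ) :
    HasDerivWithinAt χ (sSup (slope χ t '' Iio t)) (Iio t) t := by
  have hmono : MonotoneOn (slope χ t) (Iio t) := by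
    intro x hx y hy hxy
    exact hconv.slope_mono (mem_univ t) ⟨mem_univ x, ne_of_lt hx⟩ ⟨mem_univ y, ne_of_lt hy⟩ hxy
  have hbdd : BddAbove (slope χ t '' Iio t) := by
    refine ⟨slope χ t (t + 1), ?_⟩
    rintro _ ⟨x, hx, rfl⟩
    have hx' : x < t := hx
    exact hconv.slope_mono (mem_univ t) ⟨mem_univ x, ne_of_lt hx'⟩
      ⟨mem_univ _, by intro h; simp at h⟩ (by linarith)
  have := hmono.tendsto_nhdsLT hbdd
  rw [hasDerivWithinAt_iff_tendsto_slope]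
  rwa [Set.diff_singleton_eq_self (by simp)]

/-- first half of Lemma 5.2: Let `χ : ℝ → ℝ` be convex, nondecreasing
and bounded below, with left derivative `χ'` (formalized as `derivWithin χ (Iio t) t`).
Then `χ'(t) → 0` as `t → −∞`, and if additionally `χ 0 = 0` and `χ'(0) = 1`, then
`∫₀^∞ χ''(−s) ds = 1` in the Lebesgue–Stieltjes sense, i.e. the total variation of the
nondecreasing function `χ'` on `(−∞, 0]`, namely `χ'(0) − inf_{t ≤ 0} χ'(t)`,
equals `1`. -/
theorem stmt19 (χ : ℝ → ℝ)
    (hconv : ConvexOn ℝ Set.univ χ) (hmono : Monotone χ)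
    (hbdd : BddBelow (Set.range χ))
    (h0 : χ 0 = 0) (h1 : derivWithin χ (Set.Iio (0 : ℝ)) 0 = 1) :
    Tendsto (fun t => derivWithin χ (Set.Iio t) t) atBot (nhds 0) ∧
    derivWithin χ (Set.Iio (0 : ℝ)) 0
        - sInf ((fun t => derivWithin χ (Set.Iio t) t) '' Set.Iic (0 : ℝ)) = 1 := by
  set φ : ℝ → ℝ := fun t => derivWithin χ (Set.Iio t) t with hφ
  have hD : ∀ t, HasDerivWithinAt χ (φ t) (Iio t) t := fun t =>
    (aux_hasDeriv χ hconv t).differentiableWithinAt.hasDerivWithinAt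
  -- nonnegativity
  have hnonneg : ∀ t, 0 ≤ φ t := by
    intro t
    have h1 : slope χ (t - 1) t ≤ φ t :=
      hconv.slope_le_of_hasDerivWithinAt_Iio (mem_univ _) (mem_univ _) (by linarith) (hD t)
    have h2 : (0 : ℝ) ≤ slope χ (t - 1) t := by
      rw [slope_def_field]
      apply div_nonneg (by linarith [hmono (show t - 1 ≤ t by linarith)]) (by linarith)
    linarith
  -- upper bound by right slope
  have hub : ∀ t : ℝ, t < 0 → φ t ≤ slope χ t 0 := by
    intro t ht
    have htend : Tendsto (slope χ t) (𝓝[Iio t \ {t}] t) (𝓝 (φ t)) :=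
      hasDerivWithinAt_iff_tendsto_slope.mp (hD t)
    rw [Set.diff_singleton_eq_self (by simp)] at htend
    refine le_of_tendsto htend ?_
    filter_upwards [self_mem_nhdsWithin] with x hx
    have hx' : x < t := hx
    exact hconv.slope_mono (mem_univ t) ⟨mem_univ x, ne_of_lt hx'⟩
      ⟨mem_univ _, ne_of_gt ht⟩ (by linarith)
  obtain ⟨m, hm⟩ := hbdd
  have hm' : ∀ x, m ≤ χ x := fun x => hm ⟨x, rfl⟩
  have hub2 : ∀ t : ℝ, t < 0 → φ t ≤ m / t := by
    intro t ht
    have h2 : slope χ t 0 = (0 - χ t) / (0 - t) := by rw [slope_def_field, h0]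
    have h3 : (0 - χ t) / (0 - t) ≤ (0 - m) / (0 - t) := by
      apply div_le_div_of_nonneg_right ?_ (by linarith)
      linarith [hm' t]
    have h4 : (0 - m) / (0 - t) = m / t := by
      rw [zero_sub, zero_sub, neg_div_neg_eq]
    linarith [hub t ht, h2 ▸ (hub t ht), h3, h4 ▸ h3]
  have htends : Tendsto φ atBot (nhds 0) := by
    have hlim : Tendsto (fun t : ℝ => m / t) atBot (nhds 0) := by
      have hneg : Tendsto (fun t : ℝ => -t) atBot atTop := tendsto_neg_atBot_atTop
      have h := (tendsto_inv_atTop_zero.comp hneg).const_mul (-m)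
      simp only [mul_zero] at h
      refine h.congr fun t => ?_
      simp [Function.comp, div_eq_mul_inv, inv_neg]
    refine tendsto_of_tendsto_of_tendsto_of_le_of_le' tendsto_const_nhds hlim
      (Eventually.of_forall hnonneg) ?_
    filter_upwards [eventually_lt_atBot (0 : ℝ)] with t ht using hub2 t ht
  refine ⟨htends, ?_⟩
  have hne : (φ '' Set.Iic (0 : ℝ)).Nonempty := ⟨φ 0, 0, Set.self_mem_Iic, rfl⟩
  have hbb : BddBelow (φ '' Set.Iic (0 : ℝ)) := ⟨0, by rintro _ ⟨t, _, rfl⟩; exact hnonneg t⟩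
  have hge : 0 ≤ sInf (φ '' Set.Iic (0 : ℝ)) :=
    le_csInf hne (by rintro _ ⟨t, _, rfl⟩; exact hnonneg t)
  have hle : sInf (φ '' Set.Iic (0 : ℝ)) ≤ 0 := by
    refine ge_of_tendsto htends ?_
    filter_upwards [eventually_le_atBot (0 : ℝ)] with t ht
    exact csInf_le hbb ⟨t, ht, rfl⟩
  rw [h1, le_antisymm hle hge]
  ring
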